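/- Let s, t ≥ 2 and z > t·(s−1) be natural numbers, set θ' = t·(2s−1) and p = min(⌊(z−1)/(t·(s−1))⌋, t−1). Define P_CA = {i + t·j : 0 ≤ i ≤ t−1, 0 ≤ j ≤ s−1}, P_CB = {t·(s−1−k) + θ'·l : 0 ≤ k ≤ s−1, 0 ≤ l ≤ t−1}, P_SA = (⋃_{l=0}^{p−1} {t·s + θ'·l + w : 0 ≤ w ≤ t·(s−1)−1}) ∪ {t·s + θ'·p + u : 0 ≤ u ≤ z−1−p·t·(s−1)}, and P_SB = {t·s + θ'·(t−1) + r : 0 ≤ r ≤ z−1}. Then for every 0 ≤ i ≤ t−1 and 0 ≤ l ≤ t−1, the important power i + t·(s−1) + θ'·l belongs to none of the sumsets P_SA + P_CB, P_SA + P_SB, and P_SB + P_CA. -/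
import Mathlib


open Pointwise

lemma polydot_key (θ T M i w D l N : ℕ) (hθ : θ = T + M) (hiM : i + M < T)
    (hw : w < M) (hD : D ≤ M) :
    i + M + θ * l ≠ θ * N + (T + (w + D)) := by
  intro h
  rcases Nat.lt_trichotomy l N with hc | hc | hc
  · have h1 : θ * (l + 1) ≤ θ * N := Nat.mul_le_mul_left θ hc
    have h2 : θ * (l + 1) = θ * l + θ := by ring
    linarith
  · subst hc; linarith
  · have h1 : θ * (N + 1) ≤ θ * l := Nat.mul_le_mul_left θ hc
    have h2 : θ * (N + 1) = θ * N + θ := by ring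
    linarith

/-- PolyDot-CMPC privacy conditions C1–C3 in the branch
z > ts−t (polynomials F_{A_1} and F_{B_1}), with
θ' = t·(2s−1) and p = min(⌊(z−1)/(t·(s−1))⌋, t−1). -/
theorem polydot_conditions_large_z (s t z : ℕ) (hs : 2 ≤ s) (ht : 2 ≤ t)
    (hz : t * (s - 1) < z) :
    ∀ i l, i < t → l < t →
      i + t * (s - 1) + (t * (2 * s - 1)) * l ∉
        (({n : ℕ | ∃ l' w, l' < min ((z - 1) / (t * (s - 1))) (t - 1) ∧ w < t * (s - 1) ∧
              n = t * s + (t * (2 * s - 1)) * l' + w} ∪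
          {n : ℕ | ∃ u, u ≤ z - 1 - (min ((z - 1) / (t * (s - 1))) (t - 1)) * (t * (s - 1)) ∧
              n = t * s + (t * (2 * s - 1)) * (min ((z - 1) / (t * (s - 1))) (t - 1)) + u}) +
         {n : ℕ | ∃ k l', k < s ∧ l' < t ∧ n = t * (s - 1 - k) + (t * (2 * s - 1)) * l'}) ∧
      i + t * (s - 1) + (t * (2 * s - 1)) * l ∉
        (({n : ℕ | ∃ l' w, l' < min ((z - 1) / (t * (s - 1))) (t - 1) ∧ w < t * (s - 1) ∧
              n = t * s + (t * (2 * s - 1)) * l' + w} ∪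
          {n : ℕ | ∃ u, u ≤ z - 1 - (min ((z - 1) / (t * (s - 1))) (t - 1)) * (t * (s - 1)) ∧
              n = t * s + (t * (2 * s - 1)) * (min ((z - 1) / (t * (s - 1))) (t - 1)) + u}) +
         {n : ℕ | ∃ r, r < z ∧ n = t * s + (t * (2 * s - 1)) * (t - 1) + r}) ∧
      i + t * (s - 1) + (t * (2 * s - 1)) * l ∉
        ({n : ℕ | ∃ r, r < z ∧ n = t * s + (t * (2 * s - 1)) * (t - 1) + r} +
         {n : ℕ | ∃ i' j, i' < t ∧ j < s ∧ n = i' + t * j}) := by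
  intro i l hi hl
  set M := t * (s - 1) with hMdef
  set T := t * s with hTdef
  set θ := t * (2 * s - 1) with hθdef
  set p := min ((z - 1) / M) (t - 1) with hpdef
  have hθTM : θ = T + M := by
    rw [hθdef, hTdef, hMdef]
    have h1 : 2 * s - 1 = s + (s - 1) := by omega
    rw [h1, Nat.mul_add]
  have hTM : T = t + M := by
    rw [hTdef, hMdef]
    have h1 : s = 1 + (s - 1) := by omega
    nth_rewrite 1 [h1]
    rw [Nat.mul_add, Nat.mul_one]
  have htM : t ≤ M := by
    rw [hMdef]
    calc t = t * 1 := (Nat.mul_one t).symm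
    _ ≤ t * (s - 1) := Nat.mul_le_mul_left t (by omega)
  have hiM : i + M < T := by omega
  have hMpos : 0 < M := by omega
  have hlt1 : θ * l ≤ θ * (t - 1) := Nat.mul_le_mul_left θ (by omega)
  refine ⟨?_, ?_, ?_⟩
  · -- C1 : not in P_SA + P_CB
    intro h
    rw [Set.mem_add] at h
    obtain ⟨a, ha, b, hb, hab⟩ := h
    obtain ⟨k, l'', hk, hl'', rfl⟩ := hb
    have hD : t * (s - 1 - k) ≤ M := Nat.mul_le_mul_left t (by omega)
    rcases ha with ⟨l', w, hl', hw, rfl⟩ | ⟨u, hu, rfl⟩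
    · refine polydot_key θ T M i w (t * (s - 1 - k)) l (l' + l'') hθTM hiM hw hD ?_
      rw [← hab]; ring
    · rcases Nat.lt_or_ge p (t - 1) with hp | hp
      · -- p = (z-1)/M, so u < M
        have hpq : p = (z - 1) / M := by omega
        have hmod : (z - 1) % M < M := Nat.mod_lt _ hMpos
        have hdm' : p * M + (z - 1) % M = z - 1 := by
          rw [hpq, Nat.mul_comm]
          exact Nat.div_add_mod _ _
        have huM : u < M := by omega
        refine polydot_key θ T M i u (t * (s - 1 - k)) l (p + l'') hθTM hiM huM hD ?_
        rw [← hab]; ring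
      · -- p = t - 1, the secret term is too large
        have hpe : p = t - 1 := by omega
        rw [hpe] at hab
        linarith [Nat.zero_le u, Nat.zero_le (t * (s - 1 - k)), Nat.zero_le (θ * l'')]
  · -- C2 : not in P_SA + P_SB
    intro h
    rw [Set.mem_add] at h
    obtain ⟨a, ha, b, hb, hab⟩ := h
    obtain ⟨r, hr, rfl⟩ := hb
    have haT : T ≤ a := by
      rcases ha with ⟨l', w, hl', hw, rfl⟩ | ⟨u, hu, rfl⟩
      · linarith [Nat.zero_le (θ * l'), Nat.zero_le w]
      · linarith [Nat.zero_le (θ * p), Nat.zero_le u]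
    linarith [Nat.zero_le r]
  · -- C3 : not in P_SB + P_CA
    intro h
    rw [Set.mem_add] at h
    obtain ⟨a, ha, b, hb, hab⟩ := h
    obtain ⟨r, hr, rfl⟩ := ha
    obtain ⟨i', j, hi', hj, rfl⟩ := hb
    linarith [Nat.zero_le r, Nat.zero_le i', Nat.zero_le (t * j)]
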